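/- Let G = (V, E, v₁, V₀, V₁) be a reachability game for player i ∈ {0,1} on a (possibly infinite) arena: V = V₀ ∪ V₁ with V₀, V₁ disjoint, E ⊆ V × V, plays are maximal walks from v₁ (infinite walks, or finite walks ending in a dead end), and player i wins exactly the finite plays ending in a dead end belonging to the opponent's position set, while the opponent wins all other plays (the corresponding safety game). Then exactly one of the two players has a winning strategy, and moreover that player has a positional winning strategy (one whose moves depend only on the current position). -/

import Mathlib

/-
Common formalization of the logics SCL (static computation logic, unbounded
game-theoretic semantics) and BndSCL (bounded semantics), following the paper
"First-order logic with self-reference".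

* Games are played on arbitrary (possibly infinite) arenas; plays are maximal
  walks; strategies are functions from finite walks (histories) to positions;
  infinite plays, and finite plays ending at a dead end where `win` holds for
  neither player, are won by nobody.
* The semantic games are formalized with positions carrying the current
  (sub)formula, an environment binding each label symbol to the labelled
  formula it most recently named (this is the standard closure rendering of
  "reference formula of a claim-symbol occurrence"), the current assignment
  and the polarity (+ = true, − = false).  The bounded game additionally
  carries a clock value.
-/

set_option autoImplicit false

universe u

/-! ## Generic two-player games on (possibly infinite) arenas -/

inductive Player : Type
  | eloise : Player
  | abelard : Player
deriving DecidableEq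

def Player.opp : Player → Player
  | .eloise => .abelard
  | .abelard => .eloise

/-- A game arena: an ownership function (corresponding to the partition
`V = V₀ ∪ V₁`), an edge relation, and a predicate telling which player (if
any) wins a play ending at a given dead-end position. -/
structure GameArena (P : Type u) where
  turn : P → Player
  edge : P → P → Prop
  win : P → Player → Prop

namespace GameArena

variable {P : Type u} (A : GameArena P)

def DeadEnd (u : P) : Prop := ∀ x, ¬ A.edge u x

/-- `w` is a finite nonempty walk whose first element is `v`. -/
def IsWalkFrom (v : P) (w : List P) : Prop :=
  w.head? = some v ∧ List.Chain' A.edge w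

/-- A finite (maximal) play from `v`: a walk whose last element is a dead end. -/
def IsFinitePlay (v : P) (w : List P) : Prop :=
  A.IsWalkFrom v w ∧ ∀ u, w.getLast? = some u → A.DeadEnd u

/-- An infinite play from `v`. -/
def IsInfPlay (v : P) (f : ℕ → P) : Prop :=
  f 0 = v ∧ ∀ n, A.edge (f n) (f (n + 1))

/-- A strategy (a function from histories to positions) of player `pl` is
legal if it always prescribes a move along an edge whenever a move exists. -/
def LegalFor (pl : Player) (v : P) (σ : List P → P) : Prop :=
  ∀ w u, A.IsWalkFrom v w → w.getLast? = some u → A.turn u = pl →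
    (∃ x, A.edge u x) → A.edge u (σ w)

/-- The strategy `σ` of player `pl` is followed in the finite play `w`. -/
def FollowsFin (pl : Player) (σ : List P → P) (w : List P) : Prop :=
  ∀ q u x, (q ++ [x]) <+: w → q.getLast? = some u → A.turn u = pl → x = σ q

/-- The strategy `σ` of player `pl` is followed in the infinite play `f`. -/
def FollowsInf (pl : Player) (σ : List P → P) (f : ℕ → P) : Prop :=
  ∀ n, A.turn (f n) = pl →
    f (n + 1) = σ (List.ofFn fun i : Fin (n + 1) => f i)

/-- `σ` is a winning strategy of player `pl` from `v`: it is legal, every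
finite maximal play following it ends in a dead end won by `pl`, and no
infinite play follows it (infinite plays are won by neither player). -/
def WinningStrategy (pl : Player) (v : P) (σ : List P → P) : Prop :=
  A.LegalFor pl v σ ∧
  (∀ w, A.IsFinitePlay v w → A.FollowsFin pl σ w →
      ∃ u, w.getLast? = some u ∧ A.win u pl) ∧
  (∀ f, A.IsInfPlay v f → ¬ A.FollowsInf pl σ f)

def HasWinningStrategy (pl : Player) (v : P) : Prop :=
  ∃ σ : List P → P, A.WinningStrategy pl v σ

end GameArena

/-- A positional strategy: its moves depend only on the current position. -/
def Positional {P : Type u} (σ : List P → P) : Prop :=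
  ∀ q q' : List P, q.getLast? = q'.getLast? → σ q = σ q'

/-! ## Syntax of SCL / BndSCL -/

/-- A purely relational vocabulary. -/
structure Vocab : Type 1 where
  Rel : Type
  arity : Rel → ℕ

/-- Formulas of SCL / BndSCL over the vocabulary `V`.  Variables and label
symbols are natural numbers; `claim L` is the claim symbol `C_L` and
`lab L φ` is the labelled formula `L φ`. -/
inductive SCLFormula (V : Vocab) : Type
  | bot : SCLFormula V
  | eq (x y : ℕ) : SCLFormula V
  | rel (R : V.Rel) (args : Fin (V.arity R) → ℕ) : SCLFormula V
  | claim (L : ℕ) : SCLFormula V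
  | not (φ : SCLFormula V) : SCLFormula V
  | and (φ ψ : SCLFormula V) : SCLFormula V
  | or (φ ψ : SCLFormula V) : SCLFormula V
  | ex (x : ℕ) (φ : SCLFormula V) : SCLFormula V
  | all (x : ℕ) (φ : SCLFormula V) : SCLFormula V
  | lab (L : ℕ) (φ : SCLFormula V) : SCLFormula V

namespace SCLFormula

variable {V : Vocab}

/-- First-order atoms. -/
def IsFOAtom : SCLFormula V → Prop
  | .bot => True
  | .eq _ _ => True
  | .rel _ _ => True
  | _ => False

/-- Purely first-order formulas (no claim symbols, no label symbols). -/
def IsFO : SCLFormula V → Prop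
  | .bot => True
  | .eq _ _ => True
  | .rel _ _ => True
  | .claim _ => False
  | .not φ => IsFO φ
  | .and φ ψ => IsFO φ ∧ IsFO ψ
  | .or φ ψ => IsFO φ ∧ IsFO ψ
  | .ex _ φ => IsFO φ
  | .all _ φ => IsFO φ
  | .lab _ _ => False

/-- Free (individual) variables. -/
def freeVars : SCLFormula V → Finset ℕ
  | .bot => ∅
  | .eq x y => {x, y}
  | .rel _ a => Finset.image a Finset.univ
  | .claim _ => ∅
  | .not φ => freeVars φ
  | .and φ ψ => freeVars φ ∪ freeVars ψ
  | .or φ ψ => freeVars φ ∪ freeVars ψ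
  | .ex x φ => freeVars φ \ {x}
  | .all x φ => freeVars φ \ {x}
  | .lab _ φ => freeVars φ

/-- All variables occurring in a formula (free or bound). -/
def vars : SCLFormula V → Finset ℕ
  | .bot => ∅
  | .eq x y => {x, y}
  | .rel _ a => Finset.image a Finset.univ
  | .claim _ => ∅
  | .not φ => vars φ
  | .and φ ψ => vars φ ∪ vars ψ
  | .or φ ψ => vars φ ∪ vars ψ
  | .ex x φ => insert x (vars φ)
  | .all x φ => insert x (vars φ)
  | .lab _ φ => vars φ

/-- Sentences: formulas with no free variables. -/
def IsSentence (φ : SCLFormula V) : Prop := freeVars φ = ∅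

end SCLFormula

/-! ## Structures and first-order (Tarski) satisfaction -/

/-- A (suitable) model for vocabulary `V`: a nonempty domain together with an
interpretation of all relation symbols. -/
structure Struct (V : Vocab) where
  Dom : Type u
  dom_nonempty : Nonempty Dom
  interp : ∀ R : V.Rel, (Fin (V.arity R) → Dom) → Prop

attribute [instance] Struct.dom_nonempty

/-- Satisfaction of atoms (false on non-atoms). -/
def atomSat {V : Vocab} (M : Struct.{u} V) (s : ℕ → M.Dom) : SCLFormula V → Prop
  | .bot => False
  | .eq x y => s x = s y
  | .rel R a => M.interp R fun i => s (a i)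
  | _ => False

/-- Standard (Tarski) first-order satisfaction.  It is only meaningful on
purely first-order formulas; claim symbols are interpreted as `False` and
label symbols are ignored. -/
def FOSat {V : Vocab} (M : Struct.{u} V) : (ℕ → M.Dom) → SCLFormula V → Prop
  | _, .bot => False
  | s, .eq x y => s x = s y
  | s, .rel R a => M.interp R fun i => s (a i)
  | _, .claim _ => False
  | s, .not φ => ¬ FOSat M s φ
  | s, .and φ ψ => FOSat M s φ ∧ FOSat M s ψ
  | s, .or φ ψ => FOSat M s φ ∨ FOSat M s ψ
  | s, .ex x φ => ∃ a : M.Dom, FOSat M (Function.update s x a) φ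
  | s, .all x φ => ∀ a : M.Dom, FOSat M (Function.update s x a) φ
  | s, .lab _ φ => FOSat M s φ

/-! ## The evaluation games -/

/-- A position of the semantic game: the current formula, the environment
recording for each label symbol `L` the reference formula `L ψ` it currently
names, the current assignment, and the polarity (`true` = `+`). -/
structure SCLPos (V : Vocab) (D : Type u) : Type u where
  form : SCLFormula V
  env : ℕ → Option (SCLFormula V)
  asg : ℕ → D
  pol : Bool

/-- Which player moves at a given position. (At positions with at most one
successor the owner is irrelevant; we let Eloise own them.) -/
def posTurn {V : Vocab} {D : Type u} (p : SCLPos V D) : Player :=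
  match p.form, p.pol with
  | .and _ _, true => .abelard
  | .and _ _, false => .eloise
  | .or _ _, true => .eloise
  | .or _ _, false => .abelard
  | .all _ _, true => .abelard
  | .all _ _, false => .eloise
  | .ex _ _, true => .eloise
  | .ex _ _, false => .abelard
  | _, _ => .eloise

/-- Who wins a play ending at a given position: at an FO-atom position,
Eloise wins iff the atom's truth value agrees with the polarity, and Abelard
wins otherwise; plays ending anywhere else (e.g. at a claim symbol with no
reference formula, or with clock value 0) are won by neither player. -/
def posWin {V : Vocab} (M : Struct.{u} V) (p : SCLPos V M.Dom) : Player → Prop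
  | .eloise => p.form.IsFOAtom ∧ (atomSat M p.asg p.form ↔ p.pol = true)
  | .abelard => p.form.IsFOAtom ∧ ¬ (atomSat M p.asg p.form ↔ p.pol = true)

/-- Moves of the unbounded evaluation game `G_∞`. -/
inductive UStep {V : Vocab} (M : Struct.{u} V) :
    SCLPos V M.Dom → SCLPos V M.Dom → Prop
  | neg (φ : SCLFormula V) (e : ℕ → Option (SCLFormula V)) (s : ℕ → M.Dom) (b : Bool) :
      UStep M ⟨.not φ, e, s, b⟩ ⟨φ, e, s, !b⟩
  | andLeft (φ ψ : SCLFormula V) (e : ℕ → Option (SCLFormula V)) (s : ℕ → M.Dom) (b : Bool) :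
      UStep M ⟨.and φ ψ, e, s, b⟩ ⟨φ, e, s, b⟩
  | andRight (φ ψ : SCLFormula V) (e : ℕ → Option (SCLFormula V)) (s : ℕ → M.Dom) (b : Bool) :
      UStep M ⟨.and φ ψ, e, s, b⟩ ⟨ψ, e, s, b⟩
  | orLeft (φ ψ : SCLFormula V) (e : ℕ → Option (SCLFormula V)) (s : ℕ → M.Dom) (b : Bool) :
      UStep M ⟨.or φ ψ, e, s, b⟩ ⟨φ, e, s, b⟩
  | orRight (φ ψ : SCLFormula V) (e : ℕ → Option (SCLFormula V)) (s : ℕ → M.Dom) (b : Bool) :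
      UStep M ⟨.or φ ψ, e, s, b⟩ ⟨ψ, e, s, b⟩
  | exStep (x : ℕ) (φ : SCLFormula V) (e : ℕ → Option (SCLFormula V)) (s : ℕ → M.Dom)
      (b : Bool) (a : M.Dom) :
      UStep M ⟨.ex x φ, e, s, b⟩ ⟨φ, e, Function.update s x a, b⟩
  | allStep (x : ℕ) (φ : SCLFormula V) (e : ℕ → Option (SCLFormula V)) (s : ℕ → M.Dom)
      (b : Bool) (a : M.Dom) :
      UStep M ⟨.all x φ, e, s, b⟩ ⟨φ, e, Function.update s x a, b⟩
  | labStep (L : ℕ) (φ : SCLFormula V) (e : ℕ → Option (SCLFormula V)) (s : ℕ → M.Dom)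
      (b : Bool) :
      UStep M ⟨.lab L φ, e, s, b⟩ ⟨φ, Function.update e L (some (.lab L φ)), s, b⟩
  | claimStep (L : ℕ) (e : ℕ → Option (SCLFormula V)) (s : ℕ → M.Dom) (b : Bool)
      (χ : SCLFormula V) (h : e L = some χ) :
      UStep M ⟨.claim L, e, s, b⟩ ⟨χ, e, s, b⟩

/-- Moves of the `n`-bounded evaluation game: positions additionally carry a
clock value, which decreases by one exactly at jumps from a claim symbol to
its reference formula; a claim-symbol position with clock value `0` is a dead
end won by neither player. -/
inductive BStep {V : Vocab} (M : Struct.{u} V) :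
    SCLPos V M.Dom × ℕ → SCLPos V M.Dom × ℕ → Prop
  | neg (φ : SCLFormula V) (e : ℕ → Option (SCLFormula V)) (s : ℕ → M.Dom) (b : Bool) (n : ℕ) :
      BStep M (⟨.not φ, e, s, b⟩, n) (⟨φ, e, s, !b⟩, n)
  | andLeft (φ ψ : SCLFormula V) (e : ℕ → Option (SCLFormula V)) (s : ℕ → M.Dom) (b : Bool)
      (n : ℕ) : BStep M (⟨.and φ ψ, e, s, b⟩, n) (⟨φ, e, s, b⟩, n)
  | andRight (φ ψ : SCLFormula V) (e : ℕ → Option (SCLFormula V)) (s : ℕ → M.Dom) (b : Bool)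
      (n : ℕ) : BStep M (⟨.and φ ψ, e, s, b⟩, n) (⟨ψ, e, s, b⟩, n)
  | orLeft (φ ψ : SCLFormula V) (e : ℕ → Option (SCLFormula V)) (s : ℕ → M.Dom) (b : Bool)
      (n : ℕ) : BStep M (⟨.or φ ψ, e, s, b⟩, n) (⟨φ, e, s, b⟩, n)
  | orRight (φ ψ : SCLFormula V) (e : ℕ → Option (SCLFormula V)) (s : ℕ → M.Dom) (b : Bool)
      (n : ℕ) : BStep M (⟨.or φ ψ, e, s, b⟩, n) (⟨ψ, e, s, b⟩, n)
  | exStep (x : ℕ) (φ : SCLFormula V) (e : ℕ → Option (SCLFormula V)) (s : ℕ → M.Dom)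
      (b : Bool) (n : ℕ) (a : M.Dom) :
      BStep M (⟨.ex x φ, e, s, b⟩, n) (⟨φ, e, Function.update s x a, b⟩, n)
  | allStep (x : ℕ) (φ : SCLFormula V) (e : ℕ → Option (SCLFormula V)) (s : ℕ → M.Dom)
      (b : Bool) (n : ℕ) (a : M.Dom) :
      BStep M (⟨.all x φ, e, s, b⟩, n) (⟨φ, e, Function.update s x a, b⟩, n)
  | labStep (L : ℕ) (φ : SCLFormula V) (e : ℕ → Option (SCLFormula V)) (s : ℕ → M.Dom)
      (b : Bool) (n : ℕ) :
      BStep M (⟨.lab L φ, e, s, b⟩, n) (⟨φ, Function.update e L (some (.lab L φ)), s, b⟩, n)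
  | claimStep (L : ℕ) (e : ℕ → Option (SCLFormula V)) (s : ℕ → M.Dom) (b : Bool)
      (χ : SCLFormula V) (n : ℕ) (h : e L = some χ) :
      BStep M (⟨.claim L, e, s, b⟩, n + 1) (⟨χ, e, s, b⟩, n)

/-- The unbounded evaluation game `G_∞(𝔄, ·, ·)` as a game arena. -/
def gameU {V : Vocab} (M : Struct.{u} V) : GameArena (SCLPos V M.Dom) where
  turn := posTurn
  edge := UStep M
  win := posWin M

/-- The bounded evaluation games `G_n(𝔄, ·, ·)` (for all clock values `n`
simultaneously) as a game arena. -/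
def gameB {V : Vocab} (M : Struct.{u} V) : GameArena (SCLPos V M.Dom × ℕ) where
  turn p := posTurn p.1
  edge := BStep M
  win p := posWin M p.1

/-- The initial position of the evaluation game for `φ` under assignment `s`:
empty environment and positive polarity. -/
def initPos {V : Vocab} {D : Type u} (φ : SCLFormula V) (s : ℕ → D) : SCLPos V D :=
  ⟨φ, fun _ => none, s, true⟩

/-- Truth under the unbounded semantics (the logic SCL):
`𝔄,s ⊨ φ` iff Eloise has a winning strategy in `G_∞(𝔄,s,φ)`. -/
def SCLTrue {V : Vocab} (M : Struct.{u} V) (s : ℕ → M.Dom) (φ : SCLFormula V) : Prop :=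
  (gameU M).HasWinningStrategy .eloise (initPos φ s)

/-! ### The bounded game `G_ω` -/

/-- Positions of the game `G_ω`: the initial position (where Abelard picks a
number `n'`), the intermediate positions (where Eloise picks some `n ≥ n'`),
and the positions of the `n`-bounded games. -/
inductive GOPos (V : Vocab) (D : Type u) : Type u
  | start : GOPos V D
  | mid (n' : ℕ) : GOPos V D
  | inner (p : SCLPos V D) (clock : ℕ) : GOPos V D

inductive GOStep {V : Vocab} (M : Struct.{u} V) (φ : SCLFormula V) (s : ℕ → M.Dom) :
    GOPos V M.Dom → GOPos V M.Dom → Prop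
  | abelardPick (n' : ℕ) : GOStep M φ s .start (.mid n')
  | eloisePick (n' n : ℕ) (h : n' ≤ n) : GOStep M φ s (.mid n') (.inner (initPos φ s) n)
  | play (p q : SCLPos V M.Dom) (m k : ℕ) (h : BStep M (p, m) (q, k)) :
      GOStep M φ s (.inner p m) (.inner q k)

def goTurn {V : Vocab} {D : Type u} : GOPos V D → Player
  | .start => .abelard
  | .mid _ => .eloise
  | .inner p _ => posTurn p

def goWin {V : Vocab} (M : Struct.{u} V) : GOPos V M.Dom → Player → Prop
  | .inner p _, pl => posWin M p pl
  | _, _ => False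

/-- The bounded evaluation game `G_ω(𝔄,s,φ)`: Abelard picks `n' ∈ ℕ`, then
Eloise picks `n ≥ n'`, and then `G_n(𝔄,s,φ)` is played. -/
def gameOmega {V : Vocab} (M : Struct.{u} V) (φ : SCLFormula V) (s : ℕ → M.Dom) :
    GameArena (GOPos V M.Dom) where
  turn := goTurn
  edge := GOStep M φ s
  win := goWin M

/-- Truth under the bounded semantics (the logic BndSCL):
`𝔄,s ⊨_ω φ` iff Eloise has a winning strategy in `G_ω(𝔄,s,φ)`. -/
def BndTrue {V : Vocab} (M : Struct.{u} V) (s : ℕ → M.Dom) (φ : SCLFormula V) : Prop :=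
  (gameOmega M φ s).HasWinningStrategy .eloise .start

/-! ## Approximants -/

/-- Auxiliary structural recursion for approximants: `k` tells what to put in
place of a claim symbol.  Label symbols are deleted (while updating the
environment), and polarity is tracked through negations. -/
def approxCore {V : Vocab}
    (k : (ℕ → Option (SCLFormula V)) → Bool → ℕ → SCLFormula V) :
    (ℕ → Option (SCLFormula V)) → Bool → SCLFormula V → SCLFormula V
  | _, _, .bot => .bot
  | _, _, .eq x y => .eq x y
  | _, _, .rel R a => .rel R a
  | e, b, .claim L => k e b L
  | e, b, .not φ => .not (approxCore k e (!b) φ)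
  | e, b, .and φ ψ => .and (approxCore k e b φ) (approxCore k e b ψ)
  | e, b, .or φ ψ => .or (approxCore k e b φ) (approxCore k e b ψ)
  | e, b, .ex x φ => .ex x (approxCore k e b φ)
  | e, b, .all x φ => .all x (approxCore k e b φ)
  | e, b, .lab L φ => approxCore k (Function.update e L (some (.lab L φ))) b φ

/-- `approx n e b φ` unfolds each claim symbol of `φ` (in environment `e`,
under polarity `b`) through `n` jumps to reference formulas; claim symbols
reached with exhausted budget (or with no reference formula) are replaced by
`⊥` at positive occurrences and `⊤` (i.e. `¬⊥`) at negative occurrences, and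
all label symbols are deleted. -/
def approx {V : Vocab} : ℕ → (ℕ → Option (SCLFormula V)) → Bool → SCLFormula V → SCLFormula V
  | 0 => approxCore fun _ b _ => if b then .bot else .not .bot
  | n + 1 => approxCore fun e b L =>
      match e L with
      | some χ => approx n e b χ
      | none => if b then .bot else .not .bot

/-- The `n`-th approximant `Φⁿ_φ` of `φ`: the first-order formula obtained
from the `n`-th unfolding of `φ` by deleting all label symbols and replacing
positive claim occurrences by `⊥` and negative ones by `⊤`. -/
def approximant {V : Vocab} (φ : SCLFormula V) (n : ℕ) : SCLFormula V :=
  approx n (fun _ => none) true φ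

/-! ## STATEMENT 0: positional determinacy of reachability/safety games -/

namespace GameArena

variable {P : Type u} (A : GameArena P)

/-- A winning strategy of the reachability player `i` from `v`: every maximal
play following it is finite and ends in a dead end belonging to the opponent
(in particular, no infinite play follows it). -/
def ReachWS (i : Player) (v : P) (σ : List P → P) : Prop :=
  A.LegalFor i v σ ∧
  (∀ w, A.IsFinitePlay v w → A.FollowsFin i σ w →
      ∃ u, w.getLast? = some u ∧ A.turn u = i.opp) ∧
  (∀ f, A.IsInfPlay v f → ¬ A.FollowsInf i σ f)

/-- A winning strategy of the safety player (the opponent of `i`) from `v`: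
the opponent wins all infinite plays and all finite plays ending in a dead end
belonging to `i`, so the strategy only has to guarantee that every finite
maximal play following it ends in a position of `i`. -/
def SafetyWS (i : Player) (v : P) (σ : List P → P) : Prop :=
  A.LegalFor i.opp v σ ∧
  (∀ w, A.IsFinitePlay v w → A.FollowsFin i.opp σ w →
      ∃ u, w.getLast? = some u ∧ A.turn u = i)

end GameArena

namespace ReachProof

open GameArena

lemma player_eq_or_opp (p i : Player) : p = i ∨ p = i.opp := by
  cases p <;> cases i <;> simp [Player.opp]

lemma opp_ne (i : Player) : i.opp ≠ i := by cases i <;> simp [Player.opp]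

variable {P : Type u}

/-- Attractor with ordinal rank certificates. -/
inductive AttrO (A : GameArena P) (i : Player) : P → Ordinal.{u} → Prop
  | dead (u : P) (o : Ordinal.{u}) : A.turn u = i.opp → A.DeadEnd u → AttrO A i u o
  | mine (u x : P) (o o' : Ordinal.{u}) : A.turn u = i → A.edge u x → AttrO A i x o' →
      o' < o → AttrO A i u o
  | theirs (u : P) (o : Ordinal.{u}) (g : P → Ordinal.{u}) : A.turn u = i.opp →
      (∃ x, A.edge u x) → (∀ x, A.edge u x → g x < o) →
      (∀ x, A.edge u x → AttrO A i x (g x)) → AttrO A i u o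

variable (A : GameArena P) (i : Player)

def W (u : P) : Prop := ∃ o, AttrO A i u o

noncomputable def rank (u : P) : Ordinal.{u} := sInf {o | AttrO A i u o}

variable {A i}

lemma attr_rank {u : P} (h : W A i u) : AttrO A i u (rank A i u) := csInf_mem h

lemma rank_le {u : P} {o : Ordinal.{u}} (h : AttrO A i u o) : rank A i u ≤ o := csInf_le' h

lemma reach_step {u : P} (hW : W A i u) (ht : A.turn u = i) :
    ∃ x, A.edge u x ∧ W A i x ∧ rank A i x < rank A i u := by
  cases attr_rank hW with
  | dead _ _ h1 _ => exact absurd (h1.symm.trans ht) (opp_ne i)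
  | mine _ x _ o' h1 h2 h3 h4 =>
      exact ⟨x, h2, ⟨o', h3⟩, lt_of_le_of_lt (rank_le h3) h4⟩
  | theirs _ _ _ h1 _ _ _ => exact absurd (h1.symm.trans ht) (opp_ne i)

lemma safe_step {u x : P} (hW : W A i u) (ht : A.turn u = i.opp) (he : A.edge u x) :
    W A i x ∧ rank A i x < rank A i u := by
  cases attr_rank hW with
  | dead _ _ _ h2 => exact absurd he (h2 x)
  | mine _ y _ o' h1 h2 h3 h4 =>
      exact absurd (ht.symm.trans h1) (opp_ne i)
  | theirs _ _ g h1 h2 h3 h4 =>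
      exact ⟨⟨g x, h4 x he⟩, lt_of_le_of_lt (rank_le (h4 x he)) (h3 x he)⟩

lemma dead_turn {u : P} (hW : W A i u) (hd : A.DeadEnd u) : A.turn u = i.opp := by
  cases attr_rank hW with
  | dead _ _ h1 _ => exact h1
  | mine _ x _ o' h1 h2 _ _ => exact absurd h2 (hd x)
  | theirs _ _ _ _ h2 _ _ => obtain ⟨x, hx⟩ := h2; exact absurd hx (hd x)

-- closure properties of the complement
lemma notW_dead_turn {u : P} (hW : ¬ W A i u) (hd : A.DeadEnd u) : A.turn u = i := by
  rcases player_eq_or_opp (A.turn u) i with h | h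
  · exact h
  · exact absurd ⟨0, AttrO.dead u 0 h hd⟩ hW

lemma notW_mine {u x : P} (hW : ¬ W A i u) (ht : A.turn u = i) (he : A.edge u x) :
    ¬ W A i x := by
  rintro ⟨o, ho⟩
  exact hW ⟨o + 1, AttrO.mine u x (o + 1) o ht he ho (Order.lt_succ o)⟩

lemma notW_theirs {u : P} (hW : ¬ W A i u) (ht : A.turn u = i.opp)
    (hne : ∃ x, A.edge u x) : ∃ x, A.edge u x ∧ ¬ W A i x := by
  by_contra h
  push_neg at h
  refine hW ⟨(⨆ x : {x // A.edge u x}, rank A i x.1) + 1,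
    AttrO.theirs u _ (rank A i) ht hne (fun x hx => ?_) (fun x hx => attr_rank (h x hx))⟩
  exact lt_of_le_of_lt (le_ciSup (f := fun y : {y // A.edge u y} => rank A i y.1) (Ordinal.bddAbove_range _) ⟨x, hx⟩) (Order.lt_succ _)

end ReachProof

namespace ReachProof

variable {P : Type u} {A : GameArena P} {i : Player}

lemma head?_append_left {α : Type*} {l l' : List α} (h : l ≠ []) :
    (l ++ l').head? = l.head? := by
  cases l with
  | nil => simp at h
  | cons a t => simp

open Classical in
/-- Reach player's positional move. -/
noncomputable def pickR (A : GameArena P) (i : Player) (v : P) (u : P) : P :=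
  if h : ∃ x, A.edge u x ∧ W A i x ∧ rank A i x < rank A i u then h.choose
  else if h2 : ∃ x, A.edge u x then h2.choose else v

open Classical in
/-- Safety player's positional move. -/
noncomputable def pickS (A : GameArena P) (i : Player) (v : P) (u : P) : P :=
  if h : ∃ x, A.edge u x ∧ ¬ W A i x then h.choose
  else if h2 : ∃ x, A.edge u x then h2.choose else v

lemma pickR_edge (v u : P) (h : ∃ x, A.edge u x) : A.edge u (pickR A i v u) := by
  unfold pickR
  split
  · next h' => exact h'.choose_spec.1
  · exact h.choose_spec

lemma pickS_edge (v u : P) (h : ∃ x, A.edge u x) : A.edge u (pickS A i v u) := by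
  unfold pickS
  split
  · next h' => exact h'.choose_spec.1
  · exact h.choose_spec

lemma stepW {v u x : P} (hW : W A i u) (he : A.edge u x)
    (hσ : A.turn u = i → x = pickR A i v u) : W A i x ∧ rank A i x < rank A i u := by
  rcases player_eq_or_opp (A.turn u) i with ht | ht
  · have h := reach_step hW ht
    rw [hσ ht]
    unfold pickR
    split
    · next h' => exact h'.choose_spec.2
    · next h' => exact absurd h h'
  · exact safe_step hW ht he

lemma stepNW {v u x : P} (hW : ¬ W A i u) (he : A.edge u x)
    (hσ : A.turn u = i.opp → x = pickS A i v u) : ¬ W A i x := by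
  rcases player_eq_or_opp (A.turn u) i with ht | ht
  · exact notW_mine hW ht he
  · have h := notW_theirs hW ht ⟨x, he⟩
    rw [hσ ht]
    unfold pickS
    split
    · next h' => exact h'.choose_spec.2
    · next h' => exact absurd h h'

/-- Invariant propagation along walks following a positional prescription at
`pl`-positions. -/
lemma walk_inv (pl : Player) (m : P → P) {Q : P → Prop} (v : P) (hv : Q v)
    (hstep : ∀ u x, Q u → A.edge u x → (A.turn u = pl → x = m u) → Q x) :
    ∀ w : List P, A.IsWalkFrom v w →
      (∀ q (u x : P), (q ++ [x]) <+: w → q.getLast? = some u → A.turn u = pl → x = m u) →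
      ∀ u, w.getLast? = some u → Q u := by
  intro w
  induction w using List.reverseRecOn with
  | nil => intro _ _ u hu; simp at hu
  | append_singleton q z ih =>
    intro hwalk hfol u hu
    rw [List.getLast?_concat] at hu
    obtain rfl : z = u := by injection hu
    rcases List.eq_nil_or_concat q with rfl | ⟨q', y, rfl⟩
    · obtain rfl : z = v := by
        have := hwalk.1
        simp [List.head?] at this
        exact this
      exact hv
    · simp only [List.concat_eq_append] at ih hwalk hfol ⊢
      have hq : (q' ++ [y]).getLast? = some y := List.getLast?_concat
      have hchain := List.isChain_append.mp hwalk.2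
      have hedge : A.edge y z := by
        have h3 := hchain.2.2
        exact h3 y (by rw [hq]; rfl) z rfl
      have hwalk' : A.IsWalkFrom v (q' ++ [y]) := by
        refine ⟨?_, hchain.1⟩
        exact (head?_append_left (by simp)).symm.trans hwalk.1
      have hQy : Q y := by
        refine ih hwalk' (fun q2 u' x' hpre hlast ht => ?_) y hq
        exact hfol q2 u' x' (hpre.trans (List.prefix_append _ _)) hlast ht
      exact hstep y z hQy hedge (fun ht => hfol (q' ++ [y]) y z List.prefix_rfl hq ht)

lemma no_inf {v : P} {f : ℕ → P} (hv : W A i v) (hf : A.IsInfPlay v f)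
    (hfol : ∀ n, A.turn (f n) = i → f (n + 1) = pickR A i v (f n)) : False := by
  have hWn : ∀ n, W A i (f n) := by
    intro n
    induction n with
    | zero => rw [hf.1]; exact hv
    | succ k ihk => exact (stepW ihk (hf.2 k) (hfol k)).1
  have hdec : ∀ n, rank A i (f (n + 1)) < rank A i (f n) :=
    fun n => (stepW (hWn n) (hf.2 n) (hfol n)).2
  exact (RelEmbedding.natGT (fun n => rank A i (f n)) hdec).not_wellFounded
    wellFounded_lt

/-! ### Play construction -/

open Classical in
/-- One step of play construction. -/
noncomputable def ext (A : GameArena P) (m : List P → P) (w : List P) : List P :=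
  match w.getLast? with
  | some u => if _ : ∃ x, A.edge u x then w ++ [m w] else w
  | none => w

noncomputable def F (A : GameArena P) (m : List P → P) (v : P) (n : ℕ) : List P :=
  (ext A m)^[n] [v]

lemma F_succ (A : GameArena P) (m : List P → P) (v : P) (n : ℕ) :
    F A m v (n + 1) = ext A m (F A m v n) := Function.iterate_succ_apply' _ _ _

lemma prefix_ext (A : GameArena P) (m : List P → P) (w : List P) : w <+: ext A m w := by
  unfold ext
  split
  · split
    · exact List.prefix_append _ _
    · exact List.prefix_rfl
  · exact List.prefix_rfl

lemma exists_play (v : P) (m : List P → P)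
    (hm : ∀ w u, A.IsWalkFrom v w → w.getLast? = some u → (∃ x, A.edge u x) →
      A.edge u (m w)) :
    (∃ w, A.IsFinitePlay v w ∧ ∀ q x, q ≠ [] → (q ++ [x]) <+: w → x = m q) ∨
    (∃ f, A.IsInfPlay v f ∧
      ∀ n, f (n + 1) = m (List.ofFn fun j : Fin (n + 1) => f j)) := by
  have hwalk : ∀ n, A.IsWalkFrom v (F A m v n) := by
    intro n
    induction n with
    | zero => exact ⟨rfl, List.isChain_singleton v⟩
    | succ k ihk =>
      rw [F_succ]
      unfold ext
      split
      · next u hu =>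
        split
        · next hex =>
          refine ⟨?_, ?_⟩
          · rw [head?_append_left, ihk.1]
            intro h0
            rw [h0] at hu; simp at hu
          · refine List.isChain_append.mpr ⟨ihk.2, List.isChain_singleton _, ?_⟩
            intro a ha b hb
            simp only [Option.mem_def, hu, Option.some.injEq] at ha
            simp only [List.head?, Option.mem_def, Option.some.injEq] at hb
            subst ha; subst hb
            exact hm _ u ihk hu hex
        · exact ihk
      · exact ihk
  have hne : ∀ n, F A m v n ≠ [] := by
    intro n h0
    have := (hwalk n).1
    rw [h0] at this; simp at this
  have hlast : ∀ n, ∃ u, (F A m v n).getLast? = some u := by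
    intro n
    cases h : (F A m v n).getLast? with
    | none => exact absurd (List.getLast?_eq_none_iff.mp h) (hne n)
    | some u => exact ⟨u, rfl⟩
  have hfol : ∀ n, ∀ q x, q ≠ [] → (q ++ [x]) <+: F A m v n → x = m q := by
    intro n
    induction n with
    | zero =>
      intro q x hq hpre
      have := hpre.length_le
      simp [F] at this
      rcases q with _ | ⟨a, _ | _⟩ <;> simp_all
    | succ k ihk =>
      intro q x hq hpre
      rw [F_succ] at hpre
      unfold ext at hpre
      revert hpre
      split
      · next u hu =>
        split
        · next hex =>
          intro hpre
          rcases List.prefix_concat_iff.mp hpre with heq | hpre'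
          · obtain ⟨h1, h2⟩ := List.append_inj' heq rfl
            subst h1
            simp at h2
            exact h2
          · exact ihk q x hq hpre'
        · exact fun hpre => ihk q x hq hpre
      · exact fun hpre => ihk q x hq hpre
  by_cases hstall : ∃ n, F A m v (n + 1) = F A m v n
  · obtain ⟨n, hn⟩ := hstall
    left
    refine ⟨F A m v n, ⟨hwalk n, ?_⟩, hfol n⟩
    intro u hu x hx
    rw [F_succ] at hn
    unfold ext at hn
    rw [hu] at hn
    simp only at hn
    split at hn
    · have := congrArg List.length hn
      simp at this
    · next h => exact h ⟨x, hx⟩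
  · push_neg at hstall
    right
    have hext : ∀ n, F A m v (n + 1) = F A m v n ++ [m (F A m v n)] := by
      intro n
      obtain ⟨u, hu⟩ := hlast n
      rw [F_succ]
      unfold ext
      rw [hu]
      simp only
      split
      · rfl
      · next h =>
        exfalso
        apply hstall n
        rw [F_succ]
        unfold ext
        rw [hu]
        simp only
        split
        · next h2 => exact absurd h2 h
        · rfl
    have hlen : ∀ n, (F A m v n).length = n + 1 := by
      intro n
      induction n with
      | zero => rfl
      | succ k ihk => rw [hext k]; simp [ihk]
    set f : ℕ → P := fun n => (F A m v n).getLast (hne n) with hf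
    have hflast : ∀ n, (F A m v n).getLast? = some (f n) :=
      fun n => List.getLast?_eq_getLast (hne n)
    have hf0 : f 0 = v := by simp [hf, F]
    have hfm : ∀ n, f (n + 1) = m (F A m v n) := by
      intro n
      have h1 := hflast (n + 1)
      rw [hext n, List.getLast?_concat] at h1
      injection h1.symm
    have hex : ∀ n, ∃ x, A.edge (f n) x := by
      intro n
      by_contra h
      apply hstall n
      rw [F_succ]
      unfold ext
      rw [hflast n]
      simp only
      split
      · next h2 => exact absurd h2 h
      · rfl
    have hedge : ∀ n, A.edge (f n) (f (n + 1)) := by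
      intro n
      rw [hfm n]
      exact hm (F A m v n) (f n) (hwalk n) (hflast n) (hex n)
    have hpref : ∀ j n, j ≤ n → F A m v j <+: F A m v n := by
      intro j n hjn
      induction n, hjn using Nat.le_induction with
      | base => exact List.prefix_rfl
      | succ k hk ihk => exact ihk.trans (F_succ A m v k ▸ prefix_ext A m _)
    have hgetf : ∀ j, (F A m v j)[j]'(by rw [hlen j]; omega) = f j := by
      intro j
      have := List.getLast_eq_getElem (hne j)
      rw [hf]
      simp only [this]
      congr 1
      rw [hlen j]
      omega
    have hofn : ∀ n, F A m v n = List.ofFn (fun j : Fin (n + 1) => f j) := by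
      intro n
      apply List.ext_getElem
      · rw [hlen n, List.length_ofFn]
      · intro j h1 h2
        rw [List.getElem_ofFn]
        have hj : j ≤ n := by rw [hlen n] at h1; omega
        have hpre := hpref j n hj
        rw [← hpre.getElem (by rw [hlen j]; omega), hgetf j]
    refine ⟨f, ⟨hf0, hedge⟩, fun n => ?_⟩
    rw [hfm n, hofn n]

end ReachProof

namespace ReachProof

variable {P : Type u} {A : GameArena P} {i : Player}

lemma ofFn_getLast? {n : ℕ} (g : Fin (n + 1) → P) :
    (List.ofFn g).getLast? = some (g (Fin.last n)) := by
  rw [List.getLast?_eq_getLast (mt List.ofFn_eq_nil_iff.mp (Nat.succ_ne_zero n)),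
    List.getLast_ofFn_succ]

lemma walk_last {v : P} {w : List P} (hw : A.IsWalkFrom v w) :
    ∃ u, w.getLast? = some u := by
  cases h : w.getLast? with
  | none =>
    rw [List.getLast?_eq_none_iff] at h
    subst h
    have := hw.1
    simp at this
  | some u => exact ⟨u, rfl⟩

/-- The reach player's positional strategy. -/
noncomputable def sigR (A : GameArena P) (i : Player) (v : P) (w : List P) : P :=
  (w.getLast?).elim v (pickR A i v)

/-- The safety player's positional strategy. -/
noncomputable def sigS (A : GameArena P) (i : Player) (v : P) (w : List P) : P :=
  (w.getLast?).elim v (pickS A i v)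

lemma sigR_positional (v : P) : Positional (sigR A i v) := fun q q' h => by
  simp only [sigR, h]

lemma sigS_positional (v : P) : Positional (sigS A i v) := fun q q' h => by
  simp only [sigS, h]

lemma sigR_eq {v : P} {w : List P} {u : P} (h : w.getLast? = some u) :
    sigR A i v w = pickR A i v u := by simp [sigR, h]

lemma sigS_eq {v : P} {w : List P} {u : P} (h : w.getLast? = some u) :
    sigS A i v w = pickS A i v u := by simp [sigS, h]

lemma reach_win (v : P) (hv : W A i v) : A.ReachWS i v (sigR A i v) := by
  refine ⟨?_, ?_, ?_⟩
  · intro w u hw hu ht hex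
    rw [sigR_eq hu]
    exact pickR_edge v u hex
  · intro w hw hfol
    obtain ⟨u, hu⟩ := walk_last hw.1
    refine ⟨u, hu, ?_⟩
    have hWu : W A i u := by
      refine walk_inv i (pickR A i v) v hv
        (fun u' x hu' he hσ => (stepW hu' he hσ).1) w hw.1
        (fun q u' x hpre hlast ht => ?_) u hu
      rw [hfol q u' x hpre hlast ht, sigR_eq hlast]
    exact dead_turn hWu (hw.2 u hu)
  · intro f hf hfol
    refine no_inf hv hf (fun n ht => ?_)
    rw [hfol n ht, sigR_eq (by rw [ofFn_getLast?])]
    simp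

lemma safety_win (v : P) (hv : ¬ W A i v) : A.SafetyWS i v (sigS A i v) := by
  refine ⟨?_, ?_⟩
  · intro w u hw hu ht hex
    rw [sigS_eq hu]
    exact pickS_edge v u hex
  · intro w hw hfol
    obtain ⟨u, hu⟩ := walk_last hw.1
    refine ⟨u, hu, ?_⟩
    have hWu : ¬ W A i u := by
      refine walk_inv i.opp (pickS A i v) v hv
        (fun u' x hu' he hσ => stepNW hu' he hσ) w hw.1
        (fun q u' x hpre hlast ht => ?_) u hu
      rw [hfol q u' x hpre hlast ht, sigS_eq hlast]
    exact notW_dead_turn hWu (hw.2 u hu)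

lemma not_safety (v : P) (hv : W A i v) : ¬ ∃ σ, A.SafetyWS i v σ := by
  rintro ⟨σ, hσ⟩
  classical
  set m : List P → P :=
    fun w => (w.getLast?).elim v
      (fun u => if A.turn u = i then pickR A i v u else σ w) with hmdef
  have hm : ∀ w u, A.IsWalkFrom v w → w.getLast? = some u → (∃ x, A.edge u x) →
      A.edge u (m w) := by
    intro w u hw hu hex
    simp only [hmdef, hu, Option.elim]
    by_cases ht : A.turn u = i
    · rw [if_pos ht]
      exact pickR_edge v u hex
    · rw [if_neg ht]
      rcases player_eq_or_opp (A.turn u) i with h | h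
      · exact absurd h ht
      · exact hσ.1 w u hw hu h hex
  rcases exists_play v m hm with ⟨w, hwp, hfolm⟩ | ⟨f, hfp, hfolm⟩
  · obtain ⟨u, hu⟩ := walk_last hwp.1
    have hdead := hwp.2 u hu
    have hqne : ∀ (q : List P) (u' : P), q.getLast? = some u' → q ≠ [] := by
      rintro q u' hq rfl
      simp at hq
    have hWu : W A i u := by
      refine walk_inv i (pickR A i v) v hv
        (fun u' x hu' he hσ' => (stepW hu' he hσ').1) w hwp.1
        (fun q u' x hpre hlast ht => ?_) u hu
      rw [hfolm q x (hqne q u' hlast) hpre]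
      simp only [hmdef, hlast, Option.elim, if_pos ht]
    have hturn := dead_turn hWu hdead
    obtain ⟨u2, hu2, ht2⟩ := hσ.2 w hwp (fun q u' x hpre hlast ht => by
      rw [hfolm q x (hqne q u' hlast) hpre]
      simp only [hmdef, hlast, Option.elim]
      rw [ht, if_neg (opp_ne i)])
    rw [hu] at hu2
    obtain rfl : u2 = u := by injection hu2.symm
    exact opp_ne i (hturn.symm.trans ht2)
  · refine no_inf hv hfp (fun n ht => ?_)
    rw [hfolm n]
    simp only [hmdef, ofFn_getLast?, Option.elim]
    simp [ht]
lemma not_reach (v : P) (hv : ¬ W A i v) : ¬ ∃ σ, A.ReachWS i v σ := by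
  rintro ⟨σ, hσ⟩
  classical
  set m : List P → P :=
    fun w => (w.getLast?).elim v
      (fun u => if A.turn u = i then σ w else pickS A i v u) with hmdef
  have hm : ∀ w u, A.IsWalkFrom v w → w.getLast? = some u → (∃ x, A.edge u x) →
      A.edge u (m w) := by
    intro w u hw hu hex
    simp only [hmdef, hu, Option.elim]
    by_cases ht : A.turn u = i
    · rw [if_pos ht]
      exact hσ.1 w u hw hu ht hex
    · rw [if_neg ht]
      exact pickS_edge v u hex
  have hqne : ∀ (q : List P) (u' : P), q.getLast? = some u' → q ≠ [] := by
    rintro q u' hq rfl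
    simp at hq
  rcases exists_play v m hm with ⟨w, hwp, hfolm⟩ | ⟨f, hfp, hfolm⟩
  · obtain ⟨u, hu⟩ := walk_last hwp.1
    have hdead := hwp.2 u hu
    have hWu : ¬ W A i u := by
      refine walk_inv i.opp (pickS A i v) v hv
        (fun u' x hu' he hσ' => stepNW hu' he hσ') w hwp.1
        (fun q u' x hpre hlast ht => ?_) u hu
      rw [hfolm q x (hqne q u' hlast) hpre]
      simp only [hmdef, hlast, Option.elim]
      rw [ht, if_neg (opp_ne i)]
    have hturn := notW_dead_turn hWu hdead
    obtain ⟨u2, hu2, ht2⟩ := hσ.2.1 w hwp (fun q u' x hpre hlast ht => by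
      rw [hfolm q x (hqne q u' hlast) hpre]
      simp only [hmdef, hlast, Option.elim, if_pos ht])
    rw [hu] at hu2
    obtain rfl : u2 = u := by injection hu2.symm
    exact opp_ne i (ht2.symm.trans hturn)
  · refine hσ.2.2 f hfp (fun n ht => ?_)
    rw [hfolm n]
    simp only [hmdef, ofFn_getLast?, Option.elim]
    simp [ht]

end ReachProof

/-- In a reachability game for player `i` on an arbitrary
(possibly infinite) arena — where the opponent plays the corresponding safety
game — exactly one of the two players has a winning strategy, and moreover
that player has a positional winning strategy. -/
theorem reachability_safety_games_positionally_determined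
    {P : Type u} (A : GameArena P) (i : Player) (v : P) :
    ((∃ σ, A.ReachWS i v σ) ↔ ¬ ∃ σ, A.SafetyWS i v σ) ∧
    ((∃ σ, A.ReachWS i v σ) → ∃ σ, A.ReachWS i v σ ∧ Positional σ) ∧
    ((∃ σ, A.SafetyWS i v σ) → ∃ σ, A.SafetyWS i v σ ∧ Positional σ) := by
  classical
  by_cases hW : ReachProof.W A i v
  · have hR := ReachProof.reach_win (A := A) (i := i) v hW
    have hNS := ReachProof.not_safety (A := A) (i := i) v hW
    exact ⟨⟨fun _ => hNS, fun _ => ⟨_, hR⟩⟩,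
      fun _ => ⟨_, hR, ReachProof.sigR_positional v⟩,
      fun h => absurd h hNS⟩
  · have hS := ReachProof.safety_win (A := A) (i := i) v hW
    have hNR := ReachProof.not_reach (A := A) (i := i) v hW
    exact ⟨⟨fun h => absurd h hNR, fun h => absurd ⟨_, hS⟩ h⟩,
      fun h => absurd h hNR,
      fun _ => ⟨_, hS, ReachProof.sigS_positional v⟩⟩
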